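/- Let c₁, c₂, C ∈ ℝ with c₁ ≠ 0 and D := c₂² + 4c₁ > 0, and let P : ℝ → ℝ be differentiable and nonvanishing on an open interval I. Define y(t) = [(2c₁ + C·c₂)·sinh(½·√D·t) + C·√D·cosh(½·√D·t)] / [((c₂ − 2C)·sinh(½·√D·t) − √D·cosh(½·√D·t))·P(t)]. Then at every t ∈ I where (c₂ − 2C)·sinh(½·√D·t) − √D·cosh(½·√D·t) is nonzero, y satisfies the Riccati equation y'(t) = P(t)·y(t)² + (c₂ − P'(t)/P(t))·y(t) − c₁/P(t). -/

import Mathlib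

set_option maxHeartbeats 1600000


/-- Explicit solution of the Riccati equation
`y' = P y² + (c₂ - P'/P) y - c₁/P` when `P` is arbitrary differentiable nonvanishing
and `D = c₂² + 4c₁ > 0`. -/
theorem riccati_solution_P_arbitrary
    (I : Set ℝ) (hI : IsOpen I)
    (c₁ c₂ C : ℝ) (hc₁ : c₁ ≠ 0)
    (D : ℝ) (hD : D = c₂ ^ 2 + 4 * c₁) (hDpos : 0 < D)
    (P : ℝ → ℝ)
    (hP : ∀ t ∈ I, DifferentiableAt ℝ P t)
    (hP0 : ∀ t ∈ I, P t ≠ 0)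
    (y : ℝ → ℝ)
    (hy : ∀ t, y t =
      ((2 * c₁ + C * c₂) * Real.sinh (1 / 2 * Real.sqrt D * t)
          + C * Real.sqrt D * Real.cosh (1 / 2 * Real.sqrt D * t)) /
        (((c₂ - 2 * C) * Real.sinh (1 / 2 * Real.sqrt D * t)
          - Real.sqrt D * Real.cosh (1 / 2 * Real.sqrt D * t)) * P t)) :
    ∀ t ∈ I,
      (c₂ - 2 * C) * Real.sinh (1 / 2 * Real.sqrt D * t)
          - Real.sqrt D * Real.cosh (1 / 2 * Real.sqrt D * t) ≠ 0 →
      deriv y t = P t * (y t) ^ 2 + (c₂ - deriv P t / P t) * y t - c₁ / P t := by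
  intro t ht hq
  have hPt := hP0 t ht
  have hPd := hP t ht
  set s := Real.sqrt D with hsdef
  have hs : s ^ 2 = c₂ ^ 2 + 4 * c₁ := by
    rw [hsdef, Real.sq_sqrt hDpos.le, hD]
  set k := 1 / 2 * s with hk
  have harg : ∀ x : ℝ, HasDerivAt (fun u : ℝ => k * u) k x := fun x => by
    simpa using (hasDerivAt_id x).const_mul k
  have hsin : HasDerivAt (fun u => Real.sinh (k * u)) (Real.cosh (k * t) * k) t :=
    (Real.hasDerivAt_sinh (k * t)).comp t (harg t)
  have hcos : HasDerivAt (fun u => Real.cosh (k * u)) (Real.sinh (k * t) * k) t :=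
    (Real.hasDerivAt_cosh (k * t)).comp t (harg t)
  have hg : HasDerivAt (fun u => (2 * c₁ + C * c₂) * Real.sinh (k * u) + C * s * Real.cosh (k * u))
      ((2 * c₁ + C * c₂) * (Real.cosh (k * t) * k) + C * s * (Real.sinh (k * t) * k)) t :=
    (hsin.const_mul _).add (hcos.const_mul _)
  have hqd : HasDerivAt (fun u => (c₂ - 2 * C) * Real.sinh (k * u) - s * Real.cosh (k * u))
      ((c₂ - 2 * C) * (Real.cosh (k * t) * k) - s * (Real.sinh (k * t) * k)) t :=
    (hsin.const_mul _).sub (hcos.const_mul _)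
  have hh : HasDerivAt (fun u => ((c₂ - 2 * C) * Real.sinh (k * u) - s * Real.cosh (k * u)) * P u)
      (((c₂ - 2 * C) * (Real.cosh (k * t) * k) - s * (Real.sinh (k * t) * k)) * P t
        + ((c₂ - 2 * C) * Real.sinh (k * t) - s * Real.cosh (k * t)) * deriv P t) t :=
    hqd.mul hPd.hasDerivAt
  have hhne : ((c₂ - 2 * C) * Real.sinh (k * t) - s * Real.cosh (k * t)) * P t ≠ 0 :=
    mul_ne_zero hq hPt
  have hyfun : y = fun u => ((2 * c₁ + C * c₂) * Real.sinh (k * u) + C * s * Real.cosh (k * u)) /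
      (((c₂ - 2 * C) * Real.sinh (k * u) - s * Real.cosh (k * u)) * P u) := funext hy
  have hder : HasDerivAt y
      ((((2 * c₁ + C * c₂) * (Real.cosh (k * t) * k) + C * s * (Real.sinh (k * t) * k)) *
        (((c₂ - 2 * C) * Real.sinh (k * t) - s * Real.cosh (k * t)) * P t)
        - ((2 * c₁ + C * c₂) * Real.sinh (k * t) + C * s * Real.cosh (k * t)) *
          (((c₂ - 2 * C) * (Real.cosh (k * t) * k) - s * (Real.sinh (k * t) * k)) * P t
            + ((c₂ - 2 * C) * Real.sinh (k * t) - s * Real.cosh (k * t)) * deriv P t)) /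
        (((c₂ - 2 * C) * Real.sinh (k * t) - s * Real.cosh (k * t)) * P t) ^ 2) t := by
    rw [hyfun]; exact hg.div hh hhne
  rw [hder.deriv, hy t]
  set S := Real.sinh (k * t) with hS
  set Co := Real.cosh (k * t) with hCo
  have hco : Co ^ 2 = S ^ 2 + 1 := by rw [hCo, hS, Real.cosh_sq]
  have hk2 : k * k * 4 = c₂ ^ 2 + 4 * c₁ := by
    rw [hk]; ring_nf; nlinarith [hs]
  rw [div_eq_iff (pow_ne_zero 2 hhne)]
  have e1 := div_mul_cancel₀ ((2 * c₁ + C * c₂) * S + C * s * Co) hhne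
  have e2 := div_mul_cancel₀ (deriv P t) hPt
  have e3 := div_mul_cancel₀ c₁ hPt
  linear_combination (-(P t) * (((((2 * c₁ + C * c₂) * S + C * s * Co) / (((c₂ - 2 * C) * S - s * Co) * P t)) * (((c₂ - 2 * C) * S - s * Co) * P t)) + ((2 * c₁ + C * c₂) * S + C * s * Co)) - c₂ * ((c₂ - 2 * C) * S - s * Co) * P t + ((c₂ - 2 * C) * S - s * Co) * (deriv P t / P t * P t)) * e1 + (((c₂ - 2 * C) * S - s * Co) * ((2 * c₁ + C * c₂) * S + C * s * Co)) * e2 + (((c₂ - 2 * C) * S - s * Co) ^ 2 * P t) * e3 + (P t * (-2 * s * (c₁ + C * c₂ - C ^ 2) * (Co ^ 2 - S ^ 2))) * hk + (P t * (c₁ + C * c₂ - C ^ 2) * S ^ 2) * hs
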